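/- arXiv:2602.11908 — 4 statements merged into one kernel-verified Lean document; each statement's English description precedes it below -/
import Mathlib

section
/- Let X_1, …, X_{n+1} be exchangeable, almost surely pairwise distinct real-valued random variables. Then the rank of X_{n+1} among all n+1 variables is uniformly distributed: for every j ∈ {1, …, n+1}, the probability that exactly j of the variables X_1, …, X_{n+1} are ≤ X_{n+1} equals 1/(n+1). -/
open MeasureTheory ProbabilityTheory ENNReal

lemma card_filter_comp_perm {α : Type*} [Fintype α] [DecidableEq α]
    (σ : Equiv.Perm α) (p : α → Prop) [DecidablePred p] :
    (Finset.univ.filter fun i => p (σ i)).card = (Finset.univ.filter p).card := by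
  apply Finset.card_bij (fun a _ => σ a)
  · intro a ha; simpa using (Finset.mem_filter.mp ha).2
  · intro a _ b _ h; exact σ.injective h
  · intro b hb; exact ⟨σ.symm b, by simpa using (Finset.mem_filter.mp hb).2, by simp⟩

lemma card_lt_of_lt {m : ℕ} (x : Fin m → ℝ) {k l : Fin m} (h : x k < x l) :
    (Finset.univ.filter fun i => x i ≤ x k).card
      < (Finset.univ.filter fun i => x i ≤ x l).card := by
  apply Finset.card_lt_card
  constructor
  · intro i hi; simp only [Finset.mem_filter, Finset.mem_univ, true_and] at hi ⊢
    exact hi.trans h.le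
  · intro hsub
    have hl : l ∈ Finset.univ.filter fun i => x i ≤ x l := by simp
    have := hsub hl
    simp only [Finset.mem_filter, Finset.mem_univ, true_and] at this
    exact absurd this (not_le.mpr h)

lemma rank_inj {m : ℕ} (x : Fin m → ℝ) (hx : ∀ i j : Fin m, i ≠ j → x i ≠ x j)
    {k l : Fin m}
    (h : (Finset.univ.filter fun i => x i ≤ x k).card
       = (Finset.univ.filter fun i => x i ≤ x l).card) : k = l := by
  by_contra hkl
  rcases (hx k l hkl).lt_or_gt with hlt | hlt
  · exact absurd h (card_lt_of_lt x hlt).ne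
  · exact absurd h.symm (card_lt_of_lt x hlt).ne

lemma rank_surj {m : ℕ} (x : Fin (m + 1) → ℝ)
    (hx : ∀ i j : Fin (m + 1), i ≠ j → x i ≠ x j)
    {j : ℕ} (hj : j ∈ Finset.Icc 1 (m + 1)) :
    ∃ k, (Finset.univ.filter fun i => x i ≤ x k).card = j := by
  classical
  set f : Fin (m + 1) → ℕ := fun k => (Finset.univ.filter fun i => x i ≤ x k).card with hf
  have himg : Finset.univ.image f = Finset.Icc 1 (m + 1) := by
    apply Finset.eq_of_subset_of_card_le
    · intro b hb
      simp only [Finset.mem_image] at hb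
      obtain ⟨k, _, rfl⟩ := hb
      simp only [Finset.mem_Icc]
      constructor
      · have : k ∈ Finset.univ.filter fun i => x i ≤ x k := by simp
        exact Finset.card_pos.mpr ⟨k, this⟩
      · simpa using Finset.card_filter_le Finset.univ fun i => x i ≤ x k
    · rw [Nat.card_Icc]
      rw [Finset.card_image_of_injective _ (fun k l h => rank_inj x hx h)]
      simp
  have : j ∈ Finset.univ.image f := himg ▸ hj
  simpa using this

/-- If `X 0, …, X n` are exchangeable, almost surely pairwise distinct
real-valued random variables, then the rank of the last one among all `n + 1` variables is
uniform: for every `j ∈ {1, …, n+1}`, the probability that exactly `j` of the variables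
are `≤ X (Fin.last n)` equals `1 / (n + 1)`. -/
theorem rank_of_last_uniform
    {Ω : Type*} [MeasurableSpace Ω] (μ : Measure Ω) [IsProbabilityMeasure μ]
    (n : ℕ) (X : Fin (n + 1) → Ω → ℝ) (hmeas : ∀ i, Measurable (X i))
    (hexch : ∀ σ : Equiv.Perm (Fin (n + 1)),
      Measure.map (fun ω => fun i => X (σ i) ω) μ = Measure.map (fun ω => fun i => X i ω) μ)
    (hdist : ∀ i j, i ≠ j → μ {ω | X i ω = X j ω} = 0) :
    ∀ j ∈ Finset.Icc 1 (n + 1),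
      μ {ω | (Finset.univ.filter fun i => X i ω ≤ X (Fin.last n) ω).card = j}
        = 1 / (n + 1) := by
  classical
  intro j hj
  -- measurability of rank functions on the product space
  have hrankmeas : ∀ k : Fin (n + 1),
      Measurable (fun x : Fin (n + 1) → ℝ =>
        (Finset.univ.filter fun i => x i ≤ x k).card) := by
    intro k
    have heq : (fun x : Fin (n + 1) → ℝ => (Finset.univ.filter fun i => x i ≤ x k).card)
        = fun x => ∑ i : Fin (n + 1), if x i ≤ x k then 1 else 0 := by
      funext x; rw [Finset.card_filter]
    rw [heq]
    exact Finset.measurable_sum _ fun i _ =>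
      Measurable.ite (measurableSet_le (measurable_pi_apply i) (measurable_pi_apply k))
        measurable_const measurable_const
  have hXmeas : Measurable (fun ω => fun i => X i ω) := measurable_pi_lambda _ hmeas
  -- the events
  set A : Fin (n + 1) → Set Ω :=
    fun k => {ω | (Finset.univ.filter fun i => X i ω ≤ X k ω).card = j} with hA
  have hAmeas : ∀ k, MeasurableSet (A k) := by
    intro k
    have : A k = (fun ω => fun i => X i ω) ⁻¹' ((fun x : Fin (n + 1) → ℝ =>
        (Finset.univ.filter fun i => x i ≤ x k).card) ⁻¹' {j}) := by
      ext ω; simp [A]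
    rw [this]
    exact hXmeas ((hrankmeas k) (measurableSet_singleton j))
  -- all A k have equal measure, via exchangeability
  have hAeq : ∀ k, μ (A k) = μ (A (Fin.last n)) := by
    intro k
    set σ : Equiv.Perm (Fin (n + 1)) := Equiv.swap k (Fin.last n) with hσ
    have hσmeas : Measurable (fun ω => fun i => X (σ i) ω) :=
      measurable_pi_lambda _ fun i => hmeas (σ i)
    have hS : MeasurableSet ((fun x : Fin (n + 1) → ℝ =>
        (Finset.univ.filter fun i => x i ≤ x (Fin.last n)).card) ⁻¹' {j}) :=
      (hrankmeas (Fin.last n)) (measurableSet_singleton j)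
    have key := congrArg (fun m : Measure (Fin (n + 1) → ℝ) => m
      ((fun x : Fin (n + 1) → ℝ =>
        (Finset.univ.filter fun i => x i ≤ x (Fin.last n)).card) ⁻¹' {j})) (hexch σ)
    rw [Measure.map_apply hσmeas hS, Measure.map_apply hXmeas hS] at key
    have hpre1 : (fun ω => fun i => X (σ i) ω) ⁻¹' ((fun x : Fin (n + 1) → ℝ =>
        (Finset.univ.filter fun i => x i ≤ x (Fin.last n)).card) ⁻¹' {j}) = A k := by
      ext ω
      simp only [Set.mem_preimage, Set.mem_singleton_iff, A, Set.mem_setOf_eq]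
      have hlast : σ (Fin.last n) = k := Equiv.swap_apply_right k (Fin.last n)
      simp only [hlast]
      rw [card_filter_comp_perm σ (fun i => X i ω ≤ X k ω)]
    have hpre2 : (fun ω => fun i => X i ω) ⁻¹' ((fun x : Fin (n + 1) → ℝ =>
        (Finset.univ.filter fun i => x i ≤ x (Fin.last n)).card) ⁻¹' {j})
        = A (Fin.last n) := by
      ext ω; simp [A]
    rw [hpre1, hpre2] at key
    exact key
  -- the good set
  set D : Set Ω := {ω | ∀ i j : Fin (n + 1), i ≠ j → X i ω ≠ X j ω} with hD
  have hDmeas : MeasurableSet D := by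
    have : D = ⋂ (i : Fin (n + 1)) (l : Fin (n + 1)) (_ : i ≠ l),
        {ω | X i ω = X l ω}ᶜ := by
      ext ω; simp [D]
    rw [this]
    exact MeasurableSet.iInter fun i => MeasurableSet.iInter fun l =>
      MeasurableSet.iInter fun _ => (measurableSet_eq_fun (hmeas i) (hmeas l)).compl
  have hDc : μ Dᶜ = 0 := by
    have hsub : Dᶜ ⊆ ⋃ (p : Fin (n + 1) × Fin (n + 1)),
        if p.1 ≠ p.2 then {ω | X p.1 ω = X p.2 ω} else ∅ := by
      intro ω hω
      simp only [D, Set.mem_compl_iff, Set.mem_setOf_eq, not_forall] at hω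
      obtain ⟨i, l, hil, h⟩ := hω
      rw [not_not] at h
      refine Set.mem_iUnion.mpr ⟨(i, l), ?_⟩
      simp [hil, h]
    refine measure_mono_null hsub (measure_iUnion_null fun p => ?_)
    by_cases hp : p.1 ≠ p.2
    · simpa [hp] using hdist p.1 p.2 hp
    · simp [hp]
  have hDone : μ D = 1 := by
    have h1 : μ D + μ Dᶜ = 1 := by
      rw [measure_add_measure_compl hDmeas]; exact measure_univ
    rw [hDc, add_zero] at h1
    exact h1
  -- A k ∩ D are pairwise disjoint and cover D
  have hdisj : Pairwise fun k l => Disjoint (A k ∩ D) (A l ∩ D) := by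
    intro k l hkl
    rw [Set.disjoint_left]
    rintro ω ⟨hk, hωD⟩ ⟨hl, _⟩
    exact hkl (rank_inj (fun i => X i ω) hωD (hk.trans hl.symm))
  have hcover : (⋃ k, A k ∩ D) = D := by
    ext ω
    constructor
    · intro h
      obtain ⟨k, hk⟩ := Set.mem_iUnion.mp h
      exact hk.2
    · intro hω
      obtain ⟨k, hk⟩ := rank_surj (fun i => X i ω) hω hj
      exact Set.mem_iUnion.mpr ⟨k, ⟨hk, hω⟩⟩
  have hsum : ∑ k : Fin (n + 1), μ (A k ∩ D) = 1 := by
    have h1 := measure_iUnion (μ := μ) (f := fun k => A k ∩ D)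
      (fun k l hkl => hdisj hkl) (fun k => (hAmeas k).inter hDmeas)
    rw [hcover, hDone, tsum_fintype] at h1
    exact h1.symm
  have hAD : ∀ k, μ (A k ∩ D) = μ (A k) := fun k =>
    measure_inter_conull hDc
  have htotal : (n + 1 : ℝ≥0∞) * μ (A (Fin.last n)) = 1 := by
    have : ∑ k : Fin (n + 1), μ (A (Fin.last n)) = 1 := by
      rw [← hsum]
      exact Finset.sum_congr rfl fun k _ => ((hAD k).trans (hAeq k)).symm
    rw [Finset.sum_const, Finset.card_univ, Fintype.card_fin, nsmul_eq_mul] at this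
    push_cast at this
    exact this
  have hfin : (n + 1 : ℝ≥0∞) ≠ 0 := by
    simp
  have hfin' : (n + 1 : ℝ≥0∞) ≠ ⊤ := by
    exact_mod_cast ENNReal.natCast_ne_top (n + 1)
  have : μ (A (Fin.last n)) = 1 / (n + 1 : ℝ≥0∞) := by
    rw [ENNReal.eq_div_iff hfin hfin']
    exact htotal
  exact this
end

section
/- Let X_1, …, X_{n+1} be exchangeable, almost surely pairwise distinct real-valued random variables, and let α ∈ (0,1) satisfy α ≥ 1/(n+1). Set k = ⌈(n+1)(1−α)⌉. Then 1 ≤ k ≤ n, and the calibrated threshold θ̂ = X_{(k)} satisfies P(X_{n+1} ≤ θ̂) = ⌈(n+1)(1−α)⌉/(n+1) ≥ 1 − α. -/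
open MeasureTheory ProbabilityTheory
open scoped ENNReal

/-- The `k`-th smallest value (1-indexed) among the values `f 0, …, f (n-1)`. -/
noncomputable def kthSmallest (n : ℕ) (f : Fin n → ℝ) (k : ℕ) : ℝ :=
  ((Multiset.map f (Finset.univ : Finset (Fin n)).val).sort (· ≤ ·)).getD (k - 1) 0

lemma le_getD_iff_countP_lt (l : List ℝ) (hl : l.Pairwise (· ≤ ·)) (k : ℕ)
    (hk1 : 1 ≤ k) (hk2 : k ≤ l.length) (x : ℝ) :
    x ≤ l.getD (k-1) 0 ↔ l.countP (fun y => decide (y < x)) < k := by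
  have hklt : k - 1 < l.length := by omega
  rw [List.getD_eq_getElem l 0 hklt]
  constructor
  · intro hx
    have hcc : l.countP (fun y => decide (y < x)) =
        (l.take (k-1)).countP (fun y => decide (y < x)) +
        (l.drop (k-1)).countP (fun y => decide (y < x)) := by
      conv_lhs => rw [← List.take_append_drop (k-1) l]
      rw [List.countP_append]
    rw [hcc]
    have h1 : (l.take (k-1)).countP (fun y => decide (y < x)) ≤ k - 1 :=
      le_trans List.countP_le_length (by rw [List.length_take]; omega)
    have h2 : (l.drop (k-1)).countP (fun y => decide (y < x)) = 0 := by
      rw [List.countP_eq_zero]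
      intro a ha
      simp only [decide_eq_true_eq, not_lt]
      obtain ⟨m, hm, rfl⟩ := List.mem_iff_getElem.mp ha
      rw [List.getElem_drop]
      refine le_trans hx ?_
      have hmm : k - 1 + m < l.length := by rw [List.length_drop] at hm; omega
      have := hl.rel_get_of_le (a := ⟨k-1, hklt⟩) (b := ⟨k-1+m, hmm⟩) (by simp)
      simpa using this
    omega
  · intro hc
    by_contra hx
    push_neg at hx
    have hge : k ≤ l.countP (fun y => decide (y < x)) := by
      calc k = (l.take k).countP (fun y => decide (y < x)) := by
              rw [eq_comm, List.countP_eq_length.2, List.length_take]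
              · omega
              · intro a ha
                simp only [decide_eq_true_eq]
                obtain ⟨m, hm, rfl⟩ := List.mem_iff_getElem.mp ha
                rw [List.getElem_take]
                refine lt_of_le_of_lt ?_ hx
                rw [List.length_take] at hm
                have := hl.rel_get_of_le (a := ⟨m, by omega⟩) (b := ⟨k-1, hklt⟩)
                  (by simp only [Fin.mk_le_mk]; omega)
                simpa using this
        _ ≤ l.countP (fun y => decide (y < x)) := by
              conv_rhs => rw [← List.take_append_drop k l, List.countP_append]
              omega
    omega

lemma rank_count (m k : ℕ) (v : Fin m → ℝ) (hv : Function.Injective v) (hk : k ≤ m) :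
    (Finset.univ.filter (fun i : Fin m =>
      (Finset.univ.filter (fun j => v j < v i)).card < k)).card = k := by
  set r : Fin m → ℕ := fun i => (Finset.univ.filter (fun j => v j < v i)).card with hr
  have hmono : ∀ i i', v i < v i' → r i < r i' := by
    intro i i' h
    apply Finset.card_lt_card
    rw [Finset.ssubset_iff_of_subset]
    · exact ⟨i, by simp [h], by simp⟩
    · intro j hj
      simp only [Finset.mem_filter, Finset.mem_univ, true_and] at hj ⊢
      exact hj.trans h
  have hinj : Function.Injective r := by
    intro i i' h
    by_contra hne
    rcases lt_trichotomy (v i) (v i') with hlt | heq | hgt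
    · exact absurd h (hmono i i' hlt).ne
    · exact hne (hv heq)
    · exact absurd h.symm (hmono i' i hgt).ne
  have hltm : ∀ i, r i < m := by
    intro i
    have hsub : Finset.univ.filter (fun j => v j < v i) ⊆ Finset.univ.erase i := by
      intro j hj
      simp only [Finset.mem_filter, Finset.mem_univ, true_and] at hj
      simp only [Finset.mem_erase, Finset.mem_univ, and_true]
      rintro rfl; exact lt_irrefl _ hj
    have hp := i.pos
    calc r i ≤ (Finset.univ.erase i).card := Finset.card_le_card hsub
      _ < m := by
          rw [Finset.card_erase_of_mem (Finset.mem_univ i), Finset.card_univ,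
            Fintype.card_fin]
          omega
  have himg : Finset.univ.image r = Finset.range m := by
    apply Finset.eq_of_subset_of_card_le
    · intro t ht
      simp only [Finset.mem_image, Finset.mem_univ, true_and] at ht
      obtain ⟨i, rfl⟩ := ht
      exact Finset.mem_range.2 (hltm i)
    · rw [Finset.card_range, Finset.card_image_of_injective _ hinj, Finset.card_univ,
        Fintype.card_fin]
  calc (Finset.univ.filter (fun i => r i < k)).card
      = ((Finset.univ.filter (fun i => r i < k)).image r).card := by
        rw [Finset.card_image_of_injective _ hinj]
    _ = ((Finset.univ.image r).filter (fun t => t < k)).card := by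
        congr 1
        ext t
        simp only [Finset.mem_image, Finset.mem_filter, Finset.mem_univ, true_and]
        constructor
        · rintro ⟨i, hik, rfl⟩; exact ⟨⟨i, rfl⟩, hik⟩
        · rintro ⟨⟨i, rfl⟩, htk⟩; exact ⟨i, htk, rfl⟩
    _ = k := by
        rw [himg]
        have : (Finset.range m).filter (fun t => t < k) = Finset.range k := by
          ext t
          simp only [Finset.mem_filter, Finset.mem_range]
          omega
        rw [this, Finset.card_range]

lemma le_kthSmallest_iff (n k : ℕ) (hk1 : 1 ≤ k) (hk2 : k ≤ n) (f : Fin n → ℝ) (x : ℝ) :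
    x ≤ kthSmallest n f k ↔
      (Finset.univ.filter (fun j : Fin n => f j < x)).card < k := by
  unfold kthSmallest
  set s := Multiset.map f (Finset.univ : Finset (Fin n)).val with hs
  have hlen : (s.sort (· ≤ ·)).length = n := by
    rw [Multiset.length_sort, hs, Multiset.card_map]
    simp
  rw [le_getD_iff_countP_lt _ (Multiset.pairwise_sort _ _) k hk1 (by omega) x]
  have hcp : (s.sort (· ≤ ·)).countP (fun y => decide (y < x)) =
      (Finset.univ.filter (fun j : Fin n => f j < x)).card := by
    rw [← Multiset.coe_countP (fun y => y < x), Multiset.sort_eq, hs, Multiset.countP_map]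
    rfl
  rw [hcp]

lemma filter_last_pred (n : ℕ) (v : Fin (n+1) → ℝ) :
    (Finset.univ.filter (fun j : Fin (n+1) => v j < v (Fin.last n))).card =
    (Finset.univ.filter (fun j : Fin n => v j.castSucc < v (Fin.last n))).card := by
  rw [Fin.univ_succAbove n (Fin.last n), Finset.filter_cons]
  rw [if_neg (lt_irrefl _), Finset.filter_map, Finset.card_map]
  congr 1
  apply Finset.filter_congr
  intro j _
  simp [Fin.succAboveEmb, Fin.succAbove_last]

lemma filter_perm_card {ι : Type*} [Fintype ι] [DecidableEq ι] (σ : Equiv.Perm ι)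
    (q : ι → Prop) [DecidablePred q] :
    (Finset.univ.filter (fun j => q (σ j))).card = (Finset.univ.filter q).card := by
  apply Finset.card_nbij σ
  · intro a ha; simp only [Finset.coe_filter, Finset.mem_filter, Finset.mem_univ, true_and, Set.mem_setOf_eq] at *; exact ha
  · exact fun a _ b _ h => σ.injective h
  · intro b hb
    simp only [Finset.coe_filter, Set.mem_setOf_eq, Finset.mem_univ, true_and] at hb ⊢
    exact ⟨σ.symm b, by simpa using hb, by simp⟩

/-- For exchangeable, a.s. pairwise distinct `X 0, …, X n` and
`α ∈ (0,1)` with `α ≥ 1/(n+1)`, the index `k = ⌈(n+1)(1-α)⌉` satisfies `1 ≤ k ≤ n`, and the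
calibrated threshold `θ̂ = X_{(k)}` satisfies
`P(X_{n+1} ≤ θ̂) = ⌈(n+1)(1-α)⌉ / (n+1) ≥ 1 - α`. -/
theorem calibrated_threshold_coverage
    {Ω : Type*} [MeasurableSpace Ω] (μ : Measure Ω) [IsProbabilityMeasure μ]
    (n : ℕ) (X : Fin (n + 1) → Ω → ℝ) (hmeas : ∀ i, Measurable (X i))
    (hexch : ∀ σ : Equiv.Perm (Fin (n + 1)),
      Measure.map (fun ω => fun i => X (σ i) ω) μ = Measure.map (fun ω => fun i => X i ω) μ)
    (hdist : ∀ i j, i ≠ j → μ {ω | X i ω = X j ω} = 0)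
    (α : ℝ) (hα : α ∈ Set.Ioo (0 : ℝ) 1) (hα' : 1 / ((n : ℝ) + 1) ≤ α) :
    (1 ≤ ⌈((n : ℝ) + 1) * (1 - α)⌉₊ ∧ ⌈((n : ℝ) + 1) * (1 - α)⌉₊ ≤ n) ∧
    μ {ω | X (Fin.last n) ω ≤
        kthSmallest n (fun i : Fin n => X i.castSucc ω) ⌈((n : ℝ) + 1) * (1 - α)⌉₊}
      = (⌈((n : ℝ) + 1) * (1 - α)⌉₊ : ℝ≥0∞) / (n + 1) ∧
    1 - α ≤ (⌈((n : ℝ) + 1) * (1 - α)⌉₊ : ℝ) / ((n : ℝ) + 1) := by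
  obtain ⟨hα0, hα1⟩ := hα
  have hn1 : (0:ℝ) < (n:ℝ) + 1 := by positivity
  rw [div_le_iff₀ hn1] at hα'
  set k : ℕ := ⌈((n : ℝ) + 1) * (1 - α)⌉₊ with hkdef
  have hk1 : 1 ≤ k := by
    rw [hkdef, Nat.one_le_ceil_iff]
    nlinarith
  have hkn : k ≤ n := by
    rw [hkdef, Nat.ceil_le]
    nlinarith
  have hfinal : 1 - α ≤ (k : ℝ) / ((n : ℝ) + 1) := by
    rw [le_div_iff₀ hn1]
    calc (1 - α) * ((n:ℝ) + 1) = ((n:ℝ)+1) * (1-α) := by ring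
      _ ≤ k := Nat.le_ceil _
  refine ⟨⟨hk1, hkn⟩, ?_, hfinal⟩
  -- the measurable set in the product space
  set S : Set (Fin (n+1) → ℝ) := {v | (Finset.univ.filter
      (fun j => v j < v (Fin.last n))).card < k} with hSdef
  have hS : MeasurableSet S := by
    have hf : Measurable (fun v : Fin (n+1) → ℝ =>
        (Finset.univ.filter (fun j => v j < v (Fin.last n))).card) := by
      simp only [Finset.card_filter]
      apply Finset.measurable_sum
      intro j _
      apply Measurable.ite _ measurable_const measurable_const
      exact measurableSet_lt (measurable_pi_apply j) (measurable_pi_apply _)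
    exact hf (Set.to_countable {t : ℕ | t < k}).measurableSet
  set T : Ω → (Fin (n+1) → ℝ) := fun ω => fun i => X i ω with hTdef
  have hT : Measurable T := measurable_pi_lambda _ hmeas
  -- the events B i
  set B : Fin (n+1) → Set Ω := fun i =>
    {ω | (Finset.univ.filter (fun j => X j ω < X i ω)).card < k} with hBdef
  have hBpre : ∀ i : Fin (n+1),
      B i = (fun ω => fun j => X (Equiv.swap (Fin.last n) i j) ω) ⁻¹' S := by
    intro i
    ext ω
    simp only [hBdef, hSdef, Set.mem_preimage, Set.mem_setOf_eq,
      Equiv.swap_apply_left]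
    rw [filter_perm_card (Equiv.swap (Fin.last n) i) (fun j => X j ω < X i ω)]
  have hBmeas : ∀ i, MeasurableSet (B i) := by
    intro i
    rw [hBpre i]
    exact (measurable_pi_lambda _ (fun j => hmeas _)) hS
  have hBlast : B (Fin.last n) = T ⁻¹' S := by
    ext ω; simp [hBdef, hSdef, hTdef]
  have hBconst : ∀ i, μ (B i) = μ (B (Fin.last n)) := by
    intro i
    have hTσ : Measurable (fun ω => fun j => X (Equiv.swap (Fin.last n) i j) ω) :=
      measurable_pi_lambda _ (fun j => hmeas _)
    rw [hBpre i, hBlast, ← Measure.map_apply hTσ hS, hexch (Equiv.swap (Fin.last n) i),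
      Measure.map_apply hT hS]
  -- a.e. injectivity
  have hae : ∀ᵐ ω ∂μ, Function.Injective (fun j => X j ω) := by
    have h1 : ∀ᵐ ω ∂μ, ∀ i j : Fin (n+1), i ≠ j → X i ω ≠ X j ω := by
      rw [MeasureTheory.ae_all_iff]
      intro i
      rw [MeasureTheory.ae_all_iff]
      intro j
      rcases eq_or_ne i j with rfl | hij
      · exact Filter.Eventually.of_forall (fun ω h => absurd rfl h)
      · have : μ {ω | ¬ (i ≠ j → X i ω ≠ X j ω)} = 0 := by
          have hsub : {ω | ¬ (i ≠ j → X i ω ≠ X j ω)} ⊆ {ω | X i ω = X j ω} := by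
            intro ω hω
            simp only [Set.mem_setOf_eq, Classical.not_imp, not_not] at hω
            exact hω.2
          exact measure_mono_null hsub (hdist i j hij)
        exact (MeasureTheory.ae_iff).2 this
    filter_upwards [h1] with ω hω
    intro a b hab
    by_contra hne
    exact hω a b hne hab
  -- counting: a.e. the sum of indicators is k
  have hcount : ∀ᵐ ω ∂μ, ∑ i : Fin (n+1),
      (B i).indicator (fun _ => (1:ℝ≥0∞)) ω = (k : ℝ≥0∞) := by
    filter_upwards [hae] with ω hω
    have hsum : ∑ i : Fin (n+1), (B i).indicator (fun _ => (1:ℝ≥0∞)) ω =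
        ((Finset.univ.filter (fun i : Fin (n+1) => ω ∈ B i)).card : ℝ≥0∞) := by
      rw [Finset.card_filter, Nat.cast_sum]
      apply Finset.sum_congr rfl
      intro i _
      by_cases h : ω ∈ B i <;> simp [h, Set.indicator]
    rw [hsum]
    congr 1
    have : (Finset.univ.filter (fun i : Fin (n+1) => ω ∈ B i)) =
        (Finset.univ.filter (fun i : Fin (n+1) =>
          (Finset.univ.filter (fun j => X j ω < X i ω)).card < k)) := by
      apply Finset.filter_congr
      intro i _
      simp [hBdef]
    rw [this]
    exact rank_count (n+1) k (fun j => X j ω) hω (by omega)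
  -- sum of measures
  have hsum_meas : ∑ i : Fin (n+1), μ (B i) = (k : ℝ≥0∞) := by
    have h1 : ∀ i : Fin (n+1), μ (B i) =
        ∫⁻ ω, (B i).indicator (fun _ => (1:ℝ≥0∞)) ω ∂μ := by
      intro i
      exact (MeasureTheory.lintegral_indicator_one (hBmeas i)).symm
    calc ∑ i : Fin (n+1), μ (B i)
        = ∑ i : Fin (n+1), ∫⁻ ω, (B i).indicator (fun _ => (1:ℝ≥0∞)) ω ∂μ := by
          exact Finset.sum_congr rfl (fun i _ => h1 i)
      _ = ∫⁻ ω, ∑ i : Fin (n+1), (B i).indicator (fun _ => (1:ℝ≥0∞)) ω ∂μ := by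
          rw [MeasureTheory.lintegral_finset_sum]
          intro i _
          exact measurable_const.indicator (hBmeas i)
      _ = ∫⁻ _, (k : ℝ≥0∞) ∂μ := MeasureTheory.lintegral_congr_ae hcount
      _ = (k : ℝ≥0∞) := by simp
  have hsum2 : ((n:ℝ≥0∞) + 1) * μ (B (Fin.last n)) = (k : ℝ≥0∞) := by
    have : ∑ i : Fin (n+1), μ (B i) = ((n+1 : ℕ) : ℝ≥0∞) * μ (B (Fin.last n)) := by
      rw [Finset.sum_congr rfl (fun i _ => hBconst i), Finset.sum_const,
        Finset.card_univ, Fintype.card_fin, nsmul_eq_mul]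
    rw [this] at hsum_meas
    rw [← hsum_meas]
    push_cast
    ring_nf
  -- identify the target set with B (last)
  have hset : {ω | X (Fin.last n) ω ≤
      kthSmallest n (fun i : Fin n => X i.castSucc ω) k} = B (Fin.last n) := by
    ext ω
    simp only [Set.mem_setOf_eq, hBdef]
    rw [le_kthSmallest_iff n k hk1 hkn (fun i : Fin n => X i.castSucc ω) (X (Fin.last n) ω)]
    rw [filter_last_pred n (fun j => X j ω)]
  rw [hset]
  rw [ENNReal.eq_div_iff (by simp) (by simp)]
  exact hsum2
end

section
/- Let X_1, …, X_{n+1} be exchangeable, almost surely pairwise distinct random variables taking values in the interval [0,1], and let α ∈ (0,1). Define the threshold θ̂ = X_{(⌈(n+1)(1−α)⌉)} (the ⌈(n+1)(1−α)⌉-th smallest of X_1, …, X_n) if α ≥ 1/(n+1), and θ̂ = 1 otherwise. Then P(X_{n+1} ≤ θ̂) ≥ 1 − α. -/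
open MeasureTheory ProbabilityTheory
open scoped ENNReal

open Finset in
/-- Auxiliary: rank of `v j` among all values of `v` (number of `i` with `v i ≤ v j`). -/
noncomputable def rk {m : ℕ} (v : Fin m → ℝ) (j : Fin m) : ℕ :=
  #(univ.filter fun i => v i ≤ v j)

open Finset in
lemma rk_injective {m : ℕ} {v : Fin m → ℝ} (hd : Function.Injective v) :
    Function.Injective (rk v) := by
  have key : ∀ j j', v j < v j' → rk v j < rk v j' := by
    intro j j' h
    apply Finset.card_lt_card
    constructor
    · intro i hi
      simp only [mem_filter, mem_univ, true_and] at hi ⊢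
      exact hi.trans h.le
    · intro hsub
      have := hsub (by simp [mem_filter] : j' ∈ univ.filter fun i => v i ≤ v j')
      simp only [mem_filter, mem_univ, true_and] at this
      exact absurd this (not_le.2 h)
  intro j j' h
  by_contra hne
  rcases lt_trichotomy (v j) (v j') with hv | hv | hv
  · exact absurd h (key j j' hv).ne
  · exact hne (hd hv)
  · exact absurd h.symm (key j' j hv).ne

open Finset in
lemma card_rk_le {m k : ℕ} {v : Fin m → ℝ} (hd : Function.Injective v)
    (hk1 : 1 ≤ k) (hk2 : k ≤ m) :
    #(univ.filter fun j => rk v j ≤ k) = k := by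
  classical
  have hinj := rk_injective hd
  have himg : univ.image (rk v) = Finset.Icc 1 m := by
    apply Finset.eq_of_subset_of_card_le
    · intro x hx
      simp only [mem_image, mem_univ, true_and] at hx
      obtain ⟨j, rfl⟩ := hx
      simp only [Finset.mem_Icc]
      constructor
      · have : j ∈ univ.filter fun i => v i ≤ v j := by simp
        exact Finset.card_pos.2 ⟨j, this⟩
      · exact (Finset.card_filter_le _ _).trans (by simp)
    · rw [Nat.card_Icc, Finset.card_image_of_injective _ hinj]
      simp
  have h1 : (univ.filter fun j => rk v j ≤ k).image (rk v) =
      (univ.image (rk v)).filter (· ≤ k) := by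
    rw [Finset.filter_image]
  have h2 : #(univ.filter fun j => rk v j ≤ k) =
      #((univ.image (rk v)).filter (· ≤ k)) := by
    rw [← h1, Finset.card_image_of_injective _ hinj]
  rw [h2, himg]
  have : (Finset.Icc 1 m).filter (· ≤ k) = Finset.Icc 1 k := by
    ext x; simp only [Finset.mem_filter, Finset.mem_Icc]; omega
  rw [this, Nat.card_Icc]; omega

open Finset in
lemma rk_comp_perm {m : ℕ} (v : Fin m → ℝ) (σ : Equiv.Perm (Fin m)) (j : Fin m) :
    rk (fun i => v (σ i)) j = rk v (σ j) := by
  unfold rk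
  apply Finset.card_bij (fun i _ => σ i)
  · intro a ha; simp only [mem_filter, mem_univ, true_and] at ha ⊢; exact ha
  · intro a _ b _ h; exact σ.injective h
  · intro b hb
    simp only [mem_filter, mem_univ, true_and] at hb
    exact ⟨σ.symm b, by simpa using hb, by simp⟩

open Finset in
lemma measurable_rk_pi {m : ℕ} (j : Fin m) :
    Measurable fun v : Fin m → ℝ => rk v j := by
  unfold rk
  simp_rw [Finset.card_filter]
  apply Finset.measurable_sum
  intro i _
  exact Measurable.ite (measurableSet_le (measurable_pi_apply i) (measurable_pi_apply j))
    measurable_const measurable_const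

open Finset in
lemma le_kthSmallest {n k : ℕ} (w : Fin n → ℝ) (t : ℝ) (hk1 : 1 ≤ k) (hk2 : k ≤ n)
    (hcount : n + 1 ≤ k + #(univ.filter fun i => t < w i)) :
    t ≤ kthSmallest n w k := by
  classical
  set l : List ℝ := (Multiset.map w (univ : Finset (Fin n)).val).sort (· ≤ ·) with hl
  have hlen : l.length = n := by
    simp [hl, Multiset.length_sort]
  have hsorted : l.Pairwise (· ≤ ·) := Multiset.pairwise_sort _ _
  have hidx : k - 1 < l.length := by omega
  have hθ : kthSmallest n w k = l[k-1] := List.getD_eq_getElem l 0 hidx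
  by_contra hcon
  push_neg at hcon
  rw [hθ] at hcon
  have hcnt : l.countP (fun x => decide (t < x)) = #(univ.filter fun i => t < w i) := by
    have : (↑l : Multiset ℝ) = Multiset.map w (univ : Finset (Fin n)).val :=
      Multiset.sort_eq _ _
    rw [← Multiset.coe_countP, this, Multiset.countP_map]
    rfl
  have hbound : l.countP (fun x => decide (t < x)) ≤ n - k := by
    have hsplit := List.take_append_drop k l
    calc l.countP (fun x => decide (t < x))
        = (l.take k).countP (fun x => decide (t < x))
          + (l.drop k).countP (fun x => decide (t < x)) := by
          conv_lhs => rw [← hsplit]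
          exact List.countP_append
      _ ≤ 0 + (l.drop k).length := by
          gcongr
          · rw [Nat.le_zero, List.countP_eq_zero]
            intro x hx
            simp only [decide_eq_true_eq, not_lt]
            obtain ⟨i, hi, hxi⟩ := List.mem_iff_getElem.1 hx
            have hi' : i < k := by
              have := hi; rw [List.length_take, hlen] at this; omega
            have : (l.take k)[i] = l[i] := List.getElem_take
            rw [this] at hxi
            have hle : l[i] ≤ l[k-1] := by
              have := hsorted.rel_get_of_le (a := ⟨i, by omega⟩) (b := ⟨k-1, hidx⟩)
                (by simp [Fin.le_def]; omega)
              simpa [List.get_eq_getElem] using this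
            rw [← hxi]
            exact hle.trans hcon.le
          · exact List.countP_le_length
      _ ≤ n - k := by rw [List.length_drop, hlen]; omega
  rw [hcnt] at hbound
  omega

open Finset in
lemma rk_le_imp {n k : ℕ} (v : Fin (n+1) → ℝ) (hk1 : 1 ≤ k) (hk2 : k ≤ n)
    (h : rk v (Fin.last n) ≤ k) :
    v (Fin.last n) ≤ kthSmallest n (fun i : Fin n => v i.castSucc) k := by
  classical
  set t := v (Fin.last n) with ht
  apply le_kthSmallest _ _ hk1 hk2
  have hsplit : #(univ.filter fun i : Fin (n+1) => v i ≤ t)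
      + #(univ.filter fun i : Fin (n+1) => t < v i) = n + 1 := by
    have := Finset.card_filter_add_card_filter_not
      (s := (univ : Finset (Fin (n+1)))) (p := fun i => v i ≤ t)
    simp only [not_le] at this
    simpa using this
  have hcast : #(univ.filter fun i : Fin (n+1) => t < v i)
      = #(univ.filter fun i : Fin n => t < v i.castSucc) := by
    rw [Finset.card_filter, Finset.card_filter, Fin.sum_univ_castSucc]
    simp [ht]
  have hrk : rk v (Fin.last n) = #(univ.filter fun i : Fin (n+1) => v i ≤ t) := rfl
  omega

/-- For exchangeable, a.s. pairwise distinct `[0,1]`-valued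
`X 0, …, X n` and `α ∈ (0,1)`, with threshold `θ̂ = X_{(⌈(n+1)(1-α)⌉)}` if `α ≥ 1/(n+1)`
and `θ̂ = 1` otherwise, we have `P(X_{n+1} ≤ θ̂) ≥ 1 - α`. -/
theorem calibrated_threshold_coverage_lower_bound
    {Ω : Type*} [MeasurableSpace Ω] (μ : Measure Ω) [IsProbabilityMeasure μ]
    (n : ℕ) (X : Fin (n + 1) → Ω → ℝ) (hmeas : ∀ i, Measurable (X i))
    (hrange : ∀ i ω, X i ω ∈ Set.Icc (0 : ℝ) 1)
    (hexch : ∀ σ : Equiv.Perm (Fin (n + 1)),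
      Measure.map (fun ω => fun i => X (σ i) ω) μ = Measure.map (fun ω => fun i => X i ω) μ)
    (hdist : ∀ i j, i ≠ j → μ {ω | X i ω = X j ω} = 0)
    (α : ℝ) (hα : α ∈ Set.Ioo (0 : ℝ) 1) :
    ENNReal.ofReal (1 - α) ≤
      μ {ω | X (Fin.last n) ω ≤
        if 1 / ((n : ℝ) + 1) ≤ α then
          kthSmallest n (fun i : Fin n => X i.castSucc ω) ⌈((n : ℝ) + 1) * (1 - α)⌉₊
        else 1} := by
  classical
  obtain ⟨hα0, hα1⟩ := hα
  by_cases hcond : 1 / ((n : ℝ) + 1) ≤ α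
  · simp only [if_pos hcond]
    set k := ⌈((n : ℝ) + 1) * (1 - α)⌉₊ with hk
    have hn1 : (0:ℝ) < (n:ℝ) + 1 := by positivity
    have hk1 : 1 ≤ k := Nat.one_le_ceil_iff.2 (by nlinarith)
    have hk2 : k ≤ n := by
      rw [hk, Nat.ceil_le]
      rw [div_le_iff₀ hn1] at hcond
      nlinarith
    have hY : Measurable fun ω => (fun i => X i ω) := measurable_pi_lambda _ hmeas
    set A : Fin (n+1) → Set Ω := fun j => {ω | rk (fun i => X i ω) j ≤ k} with hA
    have hAmeas : ∀ j, MeasurableSet (A j) := fun j =>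
      ((measurable_rk_pi j).comp hY) measurableSet_Iic
    have hsame : ∀ j, μ (A j) = μ (A (Fin.last n)) := by
      intro j
      have hσ := hexch (Equiv.swap j (Fin.last n))
      set σ := Equiv.swap j (Fin.last n) with hσdef
      have hS : MeasurableSet {v : Fin (n+1) → ℝ | rk v (Fin.last n) ≤ k} :=
        (measurable_rk_pi (Fin.last n)) measurableSet_Iic
      have h1 : Measurable fun ω => (fun i => X (σ i) ω) :=
        measurable_pi_lambda _ (fun i => hmeas (σ i))
      have h2 := congrArg (fun m : Measure (Fin (n+1) → ℝ) =>
        m {v | rk v (Fin.last n) ≤ k}) hσ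
      rw [Measure.map_apply h1 hS, Measure.map_apply hY hS] at h2
      have hpre1 : (fun ω => fun i => X (σ i) ω) ⁻¹' {v | rk v (Fin.last n) ≤ k} = A j := by
        ext ω
        simp only [Set.mem_preimage, Set.mem_setOf_eq, hA]
        rw [rk_comp_perm (fun i => X i ω) σ (Fin.last n), hσdef, Equiv.swap_apply_right]
      have hpre2 : (fun ω => fun i => X i ω) ⁻¹' {v | rk v (Fin.last n) ≤ k}
          = A (Fin.last n) := rfl
      rw [hpre1, hpre2] at h2
      exact h2
    have hae : ∀ᵐ ω ∂μ, Function.Injective fun i => X i ω := by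
      rw [MeasureTheory.ae_iff]
      apply measure_mono_null (t := ⋃ (i) (j), {ω | i ≠ j ∧ X i ω = X j ω})
      · intro ω hω
        simp only [Set.mem_setOf_eq, Function.Injective] at hω
        push_neg at hω
        obtain ⟨i, j, hij, hne⟩ := hω
        exact Set.mem_iUnion.2 ⟨i, Set.mem_iUnion.2 ⟨j, ⟨hne, hij⟩⟩⟩
      · apply measure_iUnion_null; intro i
        apply measure_iUnion_null; intro j
        by_cases hij : i = j
        · simp [hij]
        · exact measure_mono_null (fun ω hω => hω.2) (hdist i j hij)
    have hsum : ∑ j : Fin (n+1), μ (A j) = (k : ℝ≥0∞) := by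
      calc ∑ j : Fin (n+1), μ (A j)
          = ∑ j : Fin (n+1), ∫⁻ ω, (A j).indicator (fun _ => (1:ℝ≥0∞)) ω ∂μ :=
            Finset.sum_congr rfl fun j _ =>
              (MeasureTheory.lintegral_indicator_one (hAmeas j)).symm
        _ = ∫⁻ ω, ∑ j : Fin (n+1), (A j).indicator (fun _ => (1:ℝ≥0∞)) ω ∂μ :=
            (MeasureTheory.lintegral_finset_sum _ fun j _ =>
              (measurable_const.indicator (hAmeas j))).symm
        _ = ∫⁻ _ω, (k : ℝ≥0∞) ∂μ := by
            apply MeasureTheory.lintegral_congr_ae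
            filter_upwards [hae] with ω hω
            have hcard := card_rk_le (v := fun i => X i ω) hω hk1 (by omega : k ≤ n + 1)
            calc ∑ j : Fin (n+1), (A j).indicator (fun _ => (1:ℝ≥0∞)) ω
                = ∑ j : Fin (n+1), if rk (fun i => X i ω) j ≤ k then (1:ℝ≥0∞) else 0 := by
                  apply Finset.sum_congr rfl; intro j _
                  rw [Set.indicator_apply]
                  rfl
              _ = ((Finset.univ.filter fun j : Fin (n+1) =>
                    rk (fun i => X i ω) j ≤ k).card : ℝ≥0∞) := by
                  rw [Finset.card_filter]
                  push_cast
                  rfl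
              _ = (k:ℝ≥0∞) := by rw [hcard]
        _ = (k:ℝ≥0∞) := by rw [MeasureTheory.lintegral_const, measure_univ, mul_one]
    have hlastval : (((n+1 : ℕ)) : ℝ≥0∞) * μ (A (Fin.last n)) = (k : ℝ≥0∞) := by
      rw [← hsum, Finset.sum_congr rfl (fun j _ => hsame j), Finset.sum_const]
      simp [nsmul_eq_mul]
    have hsub : A (Fin.last n) ⊆ {ω | X (Fin.last n) ω ≤
        kthSmallest n (fun i : Fin n => X i.castSucc ω) k} := by
      intro ω hω
      exact rk_le_imp (fun i => X i ω) hk1 hk2 hω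
    have hmono := measure_mono (μ := μ) hsub
    have h5 : (((n+1:ℕ)) : ℝ≥0∞) * ENNReal.ofReal (1-α) ≤
        (((n+1:ℕ)) : ℝ≥0∞) * μ {ω | X (Fin.last n) ω ≤
          kthSmallest n (fun i : Fin n => X i.castSucc ω) k} := by
      calc (((n+1:ℕ)) : ℝ≥0∞) * ENNReal.ofReal (1-α)
          = ENNReal.ofReal (((n:ℝ)+1) * (1-α)) := by
            rw [ENNReal.ofReal_mul (by positivity)]
            congr 1
            rw [← ENNReal.ofReal_natCast (n+1)]
            norm_num
        _ ≤ (k:ℝ≥0∞) := by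
            rw [← ENNReal.ofReal_natCast k]
            exact ENNReal.ofReal_le_ofReal (Nat.le_ceil _)
        _ = (((n+1:ℕ)) : ℝ≥0∞) * μ (A (Fin.last n)) := hlastval.symm
        _ ≤ _ := mul_le_mul_right hmono _
    exact (ENNReal.mul_le_mul_iff_right (by exact_mod_cast Nat.succ_ne_zero n)
      (ENNReal.natCast_ne_top _)).1 h5
  · simp only [if_neg hcond]
    have huniv : {ω | X (Fin.last n) ω ≤ 1} = Set.univ := by
      ext ω; simp [(hrange (Fin.last n) ω).2]
    rw [huniv, measure_univ]
    exact ENNReal.ofReal_le_one.2 (by linarith)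
end

section
/- Let θ_1, …, θ_n be independent identically distributed real random variables whose common cumulative distribution function F is continuous, and let θ_{(k)} denote the k-th smallest among θ_1, …, θ_n for 1 ≤ k ≤ n. Then the conformal coverage C = F(θ_{(k)}) has the Beta(k, n+1−k) distribution; explicitly, for every t ∈ [0,1], P(C ≤ t) = ∑_{j=k}^{n} (n choose j) t^j (1−t)^{n−j}. -/
open MeasureTheory ProbabilityTheory
open scoped ENNReal

section Aux

lemma sorted_count_lemma {G : ℝ → ℝ} (hG : Monotone G) (t : ℝ)
    (l : List ℝ) (hl : l.Pairwise (· ≤ ·)) (m : ℕ) (hm : m < l.length) :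
    G (l[m]) ≤ t ↔ m + 1 ≤ l.countP (fun x => decide (G x ≤ t)) := by
  set p : ℝ → Bool := fun x => decide (G x ≤ t) with hp
  constructor
  · intro h
    have h1 : l.countP p = (l.take (m+1)).countP p + (l.drop (m+1)).countP p := by
      conv_lhs => rw [← List.take_append_drop (m+1) l]
      exact List.countP_append (p := p)
    have h2 : (l.take (m+1)).countP p = (l.take (m+1)).length := by
      rw [List.countP_eq_length]
      intro a ha
      rw [List.mem_iff_getElem] at ha
      obtain ⟨i, hi, rfl⟩ := ha
      have hi' : i < l.length := by simp [List.length_take] at hi; omega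
      rw [List.getElem_take]
      have hile : i ≤ m := by
        have := hi; simp [List.length_take] at this; omega
      have : l[i] ≤ l[m] := by
        have := hl.rel_get_of_le (a := ⟨i, hi'⟩) (b := ⟨m, hm⟩) (by simpa using hile)
        simpa using this
      simp only [hp, decide_eq_true_eq]
      exact le_trans (hG this) h
    have h3 : (l.take (m+1)).length = m + 1 := by
      rw [List.length_take]; omega
    omega
  · intro h
    by_contra hcon
    have h1 : l.countP p = (l.take m).countP p + (l.drop m).countP p := by
      conv_lhs => rw [← List.take_append_drop m l]
      exact List.countP_append (p := p)
    have h2 : (l.drop m).countP p = 0 := by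
      rw [List.countP_eq_zero]
      intro a ha
      rw [List.mem_iff_getElem] at ha
      obtain ⟨i, hi, rfl⟩ := ha
      rw [List.getElem_drop]
      have hi' : m + i < l.length := by simp [List.length_drop] at hi; omega
      have hle : l[m] ≤ l[m+i] := by
        have := hl.rel_get_of_le (a := ⟨m, hm⟩) (b := ⟨m+i, hi'⟩) (by simp)
        simpa using this
      simp only [hp, decide_eq_true_eq]
      intro hc
      exact hcon (le_trans (hG hle) hc)
    have h3 : (l.take m).countP p ≤ (l.take m).length := List.countP_le_length (p := p)
    have h4 : (l.take m).length ≤ m := by rw [List.length_take]; omega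
    omega

lemma binom_count {Ω : Type*} [MeasurableSpace Ω] (μ : Measure Ω) [IsProbabilityMeasure μ]
    (n : ℕ) (θ : Fin n → Ω → ℝ) (hmeas : ∀ i, Measurable (θ i))
    (hindep : iIndepFun θ μ) (q t : ℝ) (ht0 : 0 ≤ t) (ht1 : t ≤ 1)
    (hq : ∀ i, μ {ω | θ i ω ≤ q} = ENNReal.ofReal t) (k : ℕ) :
    μ {ω | k ≤ (Finset.univ.filter (fun i => θ i ω ≤ q)).card}
      = ∑ j ∈ Finset.Icc k n,
          (n.choose j : ℝ≥0∞) * ENNReal.ofReal t ^ j * ENNReal.ofReal (1-t) ^ (n - j) := by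
  set a := ENNReal.ofReal t with ha
  set b := ENNReal.ofReal (1-t) with hb
  have hab : b = 1 - a := by
    rw [ha, hb, ENNReal.ofReal_sub 1 ht0, ENNReal.ofReal_one]
  set B : Finset (Fin n) → Fin n → Set ℝ := fun S i => if i ∈ S then Set.Iic q else Set.Ioi q
    with hB
  set A : Finset (Fin n) → Set Ω := fun S => ⋂ i, θ i ⁻¹' B S i with hA
  set 𝒜 : Finset (Finset (Fin n)) := Finset.univ.filter (fun S => k ≤ S.card) with h𝒜
  have hBmeas : ∀ S i, MeasurableSet (B S i) := by
    intro S i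
    rw [hB]; dsimp only; split
    · exact measurableSet_Iic
    · exact measurableSet_Ioi
  have hAmeas : ∀ S, MeasurableSet (A S) := fun S =>
    MeasurableSet.iInter (fun i => (hmeas i) (hBmeas S i))
  -- the event as a union
  have hset : {ω | k ≤ (Finset.univ.filter (fun i => θ i ω ≤ q)).card} = ⋃ S ∈ 𝒜, A S := by
    ext ω
    simp only [Set.mem_setOf_eq, Set.mem_iUnion, h𝒜, Finset.mem_filter, Finset.mem_univ,
      true_and]
    constructor
    · intro h
      refine ⟨Finset.univ.filter (fun i => θ i ω ≤ q), h, ?_⟩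
      rw [hA]
      simp only [Set.mem_iInter, Set.mem_preimage, hB]
      intro i
      by_cases hi : θ i ω ≤ q
      · simp [hi]
      · simp [hi, lt_of_not_ge hi]
    · rintro ⟨S, hS, hmem⟩
      have : Finset.univ.filter (fun i => θ i ω ≤ q) = S := by
        ext i
        simp only [Finset.mem_filter, Finset.mem_univ, true_and]
        have := Set.mem_iInter.mp hmem i
        rw [Set.mem_preimage, hB] at this
        by_cases hi : i ∈ S
        · simp only [hi, if_pos] at this
          exact ⟨fun _ => hi, fun _ => this⟩
        · simp only [hi, if_neg, not_false_iff] at this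
          exact ⟨fun hc => absurd hc (not_le_of_gt this), fun hc => absurd hc hi⟩
      rw [this]; exact hS
  have hdisj : (↑𝒜 : Set (Finset (Fin n))).PairwiseDisjoint A := by
    intro S hS T hT hST
    refine Set.disjoint_left.mpr (fun ω hωS hωT => hST ?_)
    have hfilter : ∀ U : Finset (Fin n), ω ∈ A U →
        Finset.univ.filter (fun i => θ i ω ≤ q) = U := by
      intro U hωU
      ext i
      simp only [Finset.mem_filter, Finset.mem_univ, true_and]
      have := Set.mem_iInter.mp hωU i
      rw [Set.mem_preimage, hB] at this
      by_cases hi : i ∈ U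
      · simp only [hi, if_pos] at this
        exact ⟨fun _ => hi, fun _ => this⟩
      · simp only [hi, if_neg, not_false_iff] at this
        exact ⟨fun hc => absurd hc (not_le_of_gt this), fun hc => absurd hc hi⟩
    rw [← hfilter S hωS, hfilter T hωT]
  -- measure of each piece
  have hkey : ∀ S : Finset (Fin n), μ (A S) = a ^ S.card * b ^ (n - S.card) := by
    intro S
    have hprod := (iIndepFun_iff_measure_inter_preimage_eq_mul.mp hindep) Finset.univ
      (sets := B S) (fun i _ => hBmeas S i)
    have hA' : A S = ⋂ i ∈ Finset.univ, θ i ⁻¹' B S i := by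
      rw [hA]; simp
    rw [hA', hprod]
    have hterm : ∀ i, μ (θ i ⁻¹' B S i) = if i ∈ S then a else b := by
      intro i
      rw [hB]; dsimp only
      by_cases hi : i ∈ S
      · simp only [hi, if_pos]
        rw [← hq i]; rfl
      · simp only [hi, if_neg, not_false_iff]
        have hcompl : θ i ⁻¹' Set.Ioi q = {ω | θ i ω ≤ q}ᶜ := by
          ext ω; simp [not_le]
        have hms : MeasurableSet {ω | θ i ω ≤ q} := (hmeas i) measurableSet_Iic
        rw [hcompl, measure_compl hms (measure_ne_top μ _), measure_univ, hq i, hab]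
    calc ∏ i, μ (θ i ⁻¹' B S i) = ∏ i, (if i ∈ S then a else b) := by
          exact Finset.prod_congr rfl (fun i _ => hterm i)
      _ = a ^ S.card * b ^ (n - S.card) := by
          rw [Finset.prod_ite (fun _ => a) (fun _ => b)]
          rw [Finset.prod_const, Finset.prod_const]
          have h1 : Finset.univ.filter (fun i => i ∈ S) = S := by ext i; simp
          have h2 : Finset.univ.filter (fun i => ¬ i ∈ S) = Sᶜ := by ext i; simp
          rw [h1, h2, Finset.card_compl, Fintype.card_fin]
  rw [hset, measure_biUnion_finset hdisj (fun S _ => hAmeas S)]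
  calc ∑ S ∈ 𝒜, μ (A S) = ∑ S ∈ 𝒜, a ^ S.card * b ^ (n - S.card) :=
        Finset.sum_congr rfl (fun S _ => hkey S)
    _ = ∑ j ∈ Finset.Icc k n, ∑ S ∈ 𝒜.filter (fun S => S.card = j),
          a ^ S.card * b ^ (n - S.card) := by
        refine (Finset.sum_fiberwise_of_maps_to ?_ _).symm
        intro S hS
        rw [h𝒜, Finset.mem_filter] at hS
        rw [Finset.mem_Icc]
        exact ⟨hS.2, by simpa using Finset.card_le_univ S⟩
    _ = ∑ j ∈ Finset.Icc k n, (n.choose j : ℝ≥0∞) * a ^ j * b ^ (n - j) := by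
        refine Finset.sum_congr rfl (fun j hj => ?_)
        rw [Finset.mem_Icc] at hj
        have hfil : 𝒜.filter (fun S => S.card = j) = Finset.powersetCard j Finset.univ := by
          rw [Finset.powersetCard_eq_filter]
          ext S
          simp only [h𝒜, Finset.mem_filter, Finset.mem_univ, true_and, Finset.mem_powerset,
            Finset.subset_univ]
          exact ⟨fun h => h.2, fun h => ⟨h ▸ hj.1, h⟩⟩
        calc ∑ S ∈ 𝒜.filter (fun S => S.card = j), a ^ S.card * b ^ (n - S.card)
            = ∑ S ∈ 𝒜.filter (fun S => S.card = j), a ^ j * b ^ (n - j) := by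
              refine Finset.sum_congr rfl (fun S hS => ?_)
              rw [Finset.mem_filter] at hS
              rw [hS.2]
          _ = (𝒜.filter (fun S => S.card = j)).card • (a ^ j * b ^ (n - j)) :=
              Finset.sum_const _
          _ = (n.choose j : ℝ≥0∞) * a ^ j * b ^ (n - j) := by
              rw [hfil, Finset.card_powersetCard, Finset.card_univ, Fintype.card_fin,
                nsmul_eq_mul, mul_assoc]

lemma kth_event {n : ℕ} (f : Fin n → ℝ) {G : ℝ → ℝ} (hG : Monotone G) (t q : ℝ)
    (hq : ∀ x, G x ≤ t ↔ x ≤ q) (k : ℕ) (hk1 : 1 ≤ k) (hkn : k ≤ n) :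
    G (kthSmallest n f k) ≤ t ↔ k ≤ (Finset.univ.filter (fun i => f i ≤ q)).card := by
  set l := ((Multiset.map f (Finset.univ : Finset (Fin n)).val).sort (· ≤ ·)) with hl
  have hlen : l.length = n := by
    rw [hl, Multiset.length_sort, Multiset.card_map]
    exact Finset.card_univ.trans (Fintype.card_fin n)
  have hm : k - 1 < l.length := by omega
  have hkth : kthSmallest n f k = l[k-1] := List.getD_eq_getElem l 0 hm
  have hsorted : l.Pairwise (· ≤ ·) := Multiset.pairwise_sort _ _
  have hcount : l.countP (fun x => decide (G x ≤ t))
      = (Finset.univ.filter (fun i => f i ≤ q)).card := by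
    have h1 : Multiset.countP (fun x => G x ≤ t) ↑l
        = l.countP (fun x => decide (G x ≤ t)) := Multiset.coe_countP _ _
    rw [← h1, hl, Multiset.sort_eq, Multiset.countP_map]
    have h2 : Multiset.filter (fun a => G (f a) ≤ t) Finset.univ.val
        = Multiset.filter (fun a => f a ≤ q) Finset.univ.val := by
      apply Multiset.filter_congr
      intro a _
      exact hq (f a)
    rw [h2, ← Finset.filter_val]
    rfl
  rw [hkth, sorted_count_lemma hG t l hsorted (k-1) hm, hcount]
  have : k - 1 + 1 = k := by omega
  rw [this]

end Aux

/-- If `θ 0, …, θ (n-1)` are i.i.d. real random variables with common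
continuous CDF `F`, then the conformal coverage `C = F(θ_{(k)})` has the `Beta(k, n+1-k)`
distribution: for every `t ∈ [0,1]`,
`P(C ≤ t) = ∑_{j=k}^{n} (n choose j) t^j (1-t)^(n-j)`. -/
theorem coverage_beta_distribution
    {Ω : Type*} [MeasurableSpace Ω] (μ : Measure Ω) [IsProbabilityMeasure μ]
    (n : ℕ) (θ : Fin n → Ω → ℝ) (hmeas : ∀ i, Measurable (θ i))
    (hindep : iIndepFun θ μ)
    (F : ℝ → ℝ) (hF : Continuous F)
    (hcdf : ∀ i x, μ {ω | θ i ω ≤ x} = ENNReal.ofReal (F x))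
    (k : ℕ) (hk1 : 1 ≤ k) (hkn : k ≤ n) :
    ∀ t ∈ Set.Icc (0 : ℝ) 1,
      μ {ω | F (kthSmallest n (fun i => θ i ω) k) ≤ t}
        = ENNReal.ofReal
            (∑ j ∈ Finset.Icc k n, (n.choose j : ℝ) * t ^ j * (1 - t) ^ (n - j)) := by
  rintro t ⟨ht0, ht1⟩
  have hn : 0 < n := lt_of_lt_of_le hk1 hkn
  set i0 : Fin n := ⟨0, hn⟩ with hi0
  set G : ℝ → ℝ := fun x => max (F x) 0 with hGdef
  have hGF : ∀ x, ENNReal.ofReal (G x) = ENNReal.ofReal (F x) := by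
    intro x
    rcases le_total (F x) 0 with h | h
    · rw [show G x = 0 from max_eq_right h]
      simp [ENNReal.ofReal_of_nonpos h]
    · rw [show G x = F x from max_eq_left h]
  have hGcdf : ∀ i x, μ {ω | θ i ω ≤ x} = ENNReal.ofReal (G x) :=
    fun i x => (hcdf i x).trans (hGF x).symm
  have hG0 : ∀ x, 0 ≤ G x := fun x => le_max_right _ _
  have hGmono : Monotone G := by
    intro x y hxy
    have hsub : {ω | θ i0 ω ≤ x} ⊆ {ω | θ i0 ω ≤ y} := fun ω h => le_trans h hxy
    have hμ := measure_mono (μ := μ) hsub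
    rw [hGcdf i0 x, hGcdf i0 y] at hμ
    exact (ENNReal.ofReal_le_ofReal_iff (hG0 y)).mp hμ
  have hGcont : Continuous G := hF.max continuous_const
  have hsetF : {ω | F (kthSmallest n (fun i => θ i ω) k) ≤ t}
      = {ω | G (kthSmallest n (fun i => θ i ω) k) ≤ t} := by
    ext ω
    simp only [Set.mem_setOf_eq, hGdef]
    exact ⟨fun h => max_le h ht0, fun h => le_trans (le_max_left _ _) h⟩
  rw [hsetF]
  by_cases hup : ∃ x, t < G x
  · by_cases hlow : ∃ x, G x ≤ t
    · -- main case
      obtain ⟨x₀, hx₀⟩ := hup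
      set S := {x : ℝ | G x ≤ t} with hS
      have hSne : S.Nonempty := hlow
      have hSbdd : BddAbove S := by
        refine ⟨x₀, fun y hy => ?_⟩
        by_contra hcon
        push_neg at hcon
        exact absurd (le_trans (hGmono hcon.le) hy) (not_le_of_gt hx₀)
      have hSclosed : IsClosed S := isClosed_le hGcont continuous_const
      set q := sSup S with hqdef
      have hqS : q ∈ S := hSclosed.csSup_mem hSne hSbdd
      have hGq_le : G q ≤ t := hqS
      have hGq : G q = t := by
        refine le_antisymm hGq_le ?_
        by_contra hcon
        push_neg at hcon
        have hopen : IsOpen {x : ℝ | G x < t} := isOpen_lt hGcont continuous_const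
        obtain ⟨ε, hε, hball⟩ := Metric.isOpen_iff.mp hopen q hcon
        have h2 : q + ε/2 ∈ {x : ℝ | G x < t} := by
          apply hball
          rw [Metric.mem_ball, Real.dist_eq]
          rw [show q + ε/2 - q = ε/2 by ring, abs_of_pos (by linarith)]
          linarith
        have h2' : G (q + ε/2) < t := h2
        have h3 : q + ε/2 ≤ q := le_csSup hSbdd (show G (q + ε/2) ≤ t from h2'.le)
        linarith
      have hiff : ∀ x, G x ≤ t ↔ x ≤ q :=
        fun x => ⟨fun h => le_csSup hSbdd h, fun h => le_trans (hGmono h) hGq_le⟩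
      have hq' : ∀ i, μ {ω | θ i ω ≤ q} = ENNReal.ofReal t :=
        fun i => by rw [hGcdf i q, hGq]
      have hev : {ω | G (kthSmallest n (fun i => θ i ω) k) ≤ t}
          = {ω | k ≤ (Finset.univ.filter (fun i => θ i ω ≤ q)).card} := by
        ext ω
        simp only [Set.mem_setOf_eq]
        exact kth_event (fun i => θ i ω) hGmono t q hiff k hk1 hkn
      rw [hev, binom_count μ n θ hmeas hindep q t ht0 ht1 hq' k]
      have h1t : (0:ℝ) ≤ 1 - t := by linarith
      rw [ENNReal.ofReal_sum_of_nonneg (fun j _ => by positivity)]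
      refine Finset.sum_congr rfl (fun j hj => ?_)
      rw [ENNReal.ofReal_mul (by positivity), ENNReal.ofReal_mul (by positivity),
        ENNReal.ofReal_pow ht0, ENNReal.ofReal_pow h1t, ENNReal.ofReal_natCast]
    · -- G x > t for all x : forces t = 0 and empty event
      push_neg at hlow
      have ht : t = 0 := by
        by_contra htne
        have hpos : 0 < t := lt_of_le_of_ne ht0 (Ne.symm htne)
        set s : ℕ → Set Ω := fun m => {ω | θ i0 ω ≤ -(m:ℝ)} with hs
        have hanti : Antitone s := by
          intro m m' hmm ω hω
          simp only [hs, Set.mem_setOf_eq] at hω ⊢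
          refine le_trans hω (neg_le_neg ?_)
          exact_mod_cast hmm
        have hsmeas : ∀ m, NullMeasurableSet (s m) μ :=
          fun m => ((hmeas i0) measurableSet_Iic).nullMeasurableSet
        have hinter : ⋂ m, s m = ∅ := by
          rw [Set.eq_empty_iff_forall_notMem]
          intro ω hω
          obtain ⟨m, hm⟩ := exists_nat_gt (-(θ i0 ω))
          have := Set.mem_iInter.mp hω m
          rw [hs] at this
          simp only [Set.mem_setOf_eq] at this
          linarith
        have hT := tendsto_measure_iInter_atTop hsmeas hanti ⟨0, measure_ne_top μ _⟩
        rw [hinter, measure_empty] at hT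
        have hlt : (0:ℝ≥0∞) < ENNReal.ofReal t := by
          rw [ENNReal.ofReal_pos]; exact hpos
        have hev : ∀ᶠ m in Filter.atTop, (μ ∘ s) m < ENNReal.ofReal t :=
          hT.eventually_lt_const hlt
        obtain ⟨m, hm⟩ := hev.exists
        simp only [Function.comp_apply, Set.mem_Iio] at hm
        rw [show s m = {ω | θ i0 ω ≤ -(m:ℝ)} from rfl, hGcdf i0 (-(m:ℝ))] at hm
        have : G (-(m:ℝ)) < t := (ENNReal.ofReal_lt_ofReal_iff hpos).mp hm
        exact absurd this (not_lt_of_gt (hlow _))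
      have hLHS : {ω | G (kthSmallest n (fun i => θ i ω) k) ≤ t} = ∅ :=
        Set.eq_empty_iff_forall_notMem.mpr
          (fun ω h => absurd h (not_le_of_gt (hlow _)))
      rw [hLHS, measure_empty]
      have hsum : ∑ j ∈ Finset.Icc k n, (n.choose j : ℝ) * t ^ j * (1 - t) ^ (n - j) = 0 := by
        refine Finset.sum_eq_zero (fun j hj => ?_)
        rw [Finset.mem_Icc] at hj
        rw [ht, zero_pow (by omega), mul_zero, zero_mul]
      rw [hsum, ENNReal.ofReal_zero]
  · -- G x ≤ t for all x : forces t = 1 and full event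
    push_neg at hup
    have hLHS : {ω | G (kthSmallest n (fun i => θ i ω) k) ≤ t} = Set.univ :=
      Set.eq_univ_of_forall (fun ω => hup _)
    rw [hLHS, measure_univ]
    have ht : t = 1 := by
      refine le_antisymm ht1 ?_
      set s : ℕ → Set Ω := fun m => {ω | θ i0 ω ≤ (m:ℝ)} with hs
      have hmono : Monotone s := by
        intro m m' hmm ω hω
        simp only [hs, Set.mem_setOf_eq] at hω ⊢
        exact le_trans hω (by exact_mod_cast hmm)
      have hT := tendsto_measure_iUnion_atTop (μ := μ) hmono
      have hunion : ⋃ m, s m = Set.univ := by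
        rw [Set.eq_univ_iff_forall]
        intro ω
        obtain ⟨m, hm⟩ := exists_nat_gt (θ i0 ω)
        exact Set.mem_iUnion.mpr ⟨m, le_of_lt hm⟩
      rw [hunion, measure_univ] at hT
      have hle : ∀ m : ℕ, (μ ∘ s) m ≤ ENNReal.ofReal t := by
        intro m
        simp only [Function.comp_apply]
        rw [show s m = {ω | θ i0 ω ≤ (m:ℝ)} from rfl, hGcdf i0 ((m:ℝ))]
        exact ENNReal.ofReal_le_ofReal (hup _)
      have := le_of_tendsto' hT hle
      exact ENNReal.one_le_ofReal.mp this
    rw [ht]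
    have hsum : ∑ j ∈ Finset.Icc k n, (n.choose j : ℝ) * 1 ^ j * (1 - 1) ^ (n - j) = 1 := by
      rw [Finset.sum_eq_single_of_mem n (Finset.mem_Icc.mpr ⟨hkn, le_rfl⟩)]
      · simp
      · intro j hj hne
        rw [Finset.mem_Icc] at hj
        rw [show (1:ℝ) - 1 = 0 by ring, zero_pow (by omega), mul_zero]
    rw [hsum, ENNReal.ofReal_one]
end
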